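/- Let R be a ring and let I, J be right ideals of R such that J = xR is principal and R/I ≅ R/J as right R-modules. Then I can be generated by at most two elements. -/
import Mathlib


/-- If `I`, `J` are right ideals of a ring `R` (submodules of `R` over `Rᵐᵒᵖ`),
`J = xR` is principal, and `R/I ≅ R/J` as right `R`-modules, then `I` is
generated by at most two elements. -/
theorem stmt4 (R : Type*) [Ring R] (I J : Submodule Rᵐᵒᵖ R) (x : R)
    (hJ : J = Submodule.span Rᵐᵒᵖ ({x} : Set R))
    (hiso : Nonempty ((R ⧸ I) ≃ₗ[Rᵐᵒᵖ] (R ⧸ J))) :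
    ∃ a b : R, I = Submodule.span Rᵐᵒᵖ ({a, b} : Set R) := by
  obtain ⟨φ⟩ := hiso
  obtain ⟨u, hu⟩ := Submodule.Quotient.mk_surjective J
    (φ (Submodule.Quotient.mk (1 : R)))
  obtain ⟨v, hv⟩ := Submodule.Quotient.mk_surjective I
    (φ.symm (Submodule.Quotient.mk (1 : R)))
  -- key: φ (mk r) = mk (u * r)
  have key : ∀ r : R, φ (Submodule.Quotient.mk r) = Submodule.Quotient.mk (u * r) := by
    intro r
    have h1 : (Submodule.Quotient.mk r : R ⧸ I)
        = (MulOpposite.op r) • (Submodule.Quotient.mk (1 : R)) := by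
      rw [← Submodule.Quotient.mk_smul]
      simp
    rw [h1, map_smul, ← hu, ← Submodule.Quotient.mk_smul]
    simp
  -- membership characterization
  have mem_iff : ∀ r : R, r ∈ I ↔ u * r ∈ J := by
    intro r
    constructor
    · intro hr
      have : (Submodule.Quotient.mk r : R ⧸ I) = 0 := (Submodule.Quotient.mk_eq_zero I).2 hr
      have h2 := key r
      rw [this, map_zero] at h2
      exact (Submodule.Quotient.mk_eq_zero J).1 h2.symm
    · intro hr
      have : (Submodule.Quotient.mk (u * r) : R ⧸ J) = 0 :=
        (Submodule.Quotient.mk_eq_zero J).2 hr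
      have h2 := key r
      rw [this] at h2
      have h3 : (Submodule.Quotient.mk r : R ⧸ I) = 0 := by
        have := φ.injective (h2.trans (map_zero φ).symm)
        exact this
      exact (Submodule.Quotient.mk_eq_zero I).1 h3
  -- u * v - 1 ∈ J
  have huv : u * v - 1 ∈ J := by
    have h1 : φ (Submodule.Quotient.mk v) = Submodule.Quotient.mk (1 : R) := by
      rw [hv]; simp
    have h2 := key v
    rw [h1] at h2
    have h3 : (Submodule.Quotient.mk (u * v - 1) : R ⧸ J) = 0 := by
      rw [Submodule.Quotient.mk_sub]
      rw [← h2]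
      simp
    exact (Submodule.Quotient.mk_eq_zero J).1 h3
  obtain ⟨c, hc⟩ := (Submodule.mem_span_singleton).1 (hJ ▸ huv)
  -- hc : c • x = u * v - 1, i.e. x * c.unop = u * v - 1
  have hc' : x * c.unop = u * v - 1 := hc
  refine ⟨v * x, 1 - v * u, le_antisymm ?_ ?_⟩
  · intro r hr
    obtain ⟨s, hs⟩ := (Submodule.mem_span_singleton).1 (hJ ▸ (mem_iff r).1 hr)
    have hs' : x * s.unop = u * r := hs
    rw [Submodule.mem_span_pair]
    refine ⟨s, MulOpposite.op r, ?_⟩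
    show (v * x) * s.unop + (1 - v * u) * r = r
    rw [mul_assoc, hs']
    noncomm_ring
  · rw [Submodule.span_le]
    rintro y (rfl | rfl)
    · rw [SetLike.mem_coe, mem_iff, hJ, Submodule.mem_span_singleton]
      refine ⟨MulOpposite.op (1 + c.unop * x), ?_⟩
      show x * (1 + c.unop * x) = u * (v * x)
      have : u * v = 1 + x * c.unop := by rw [hc']; noncomm_ring
      rw [← mul_assoc, this]; noncomm_ring
    · rw [SetLike.mem_coe, mem_iff, hJ, Submodule.mem_span_singleton]
      refine ⟨MulOpposite.op (-(c.unop * u)), ?_⟩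
      show x * (-(c.unop * u)) = u * (1 - v * u)
      have : u * v = 1 + x * c.unop := by rw [hc']; noncomm_ring
      rw [mul_sub, ← mul_assoc, this]; noncomm_ring
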